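/- arXiv:1105.1021 — 2 statements merged into one kernel-verified Lean document; each statement's English description precedes it below -/
import Mathlib

section
/- Let n ≥ 2 and let β₀ ∈ ℂ∖{0} be such that the iterates g_{β₀}^k(c₁) are defined and avoid Λ for 1 ≤ k ≤ n−1, and ℘′(g_{β₀}^k(c₁)) ≠ 0 for 1 ≤ k ≤ n−1. Then the map h_n : β ↦ g_β^n(c₁) is complex-differentiable at β₀ and h_n′(β₀) = (1/β₀) · ∏_{k=1}^{n−1} g_{β₀}′(g_{β₀}^k(c₁)) · [ g_{β₀}(c₁) + Σ_{k=2}^{n} g_{β₀}^k(c₁) / ∏_{i=1}^{k−1} g_{β₀}′(g_{β₀}^i(c₁)) ], where g_β′(z) = β℘′(z). -/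
open Complex Filter
open scoped ENNReal

/-- `γ₃ = e^{2πi/3}`. -/
noncomputable def gam3 : ℂ := Complex.exp (2 * Real.pi * Complex.I / 3)

/-- The triangular lattice `Λ = {lλ₁ + m·γ₃λ₁ : l, m ∈ ℤ}` generated by `λ₁`. -/
def lattice (l1 : ℂ) : Set ℂ :=
  {z | ∃ l m : ℤ, z = (l : ℂ) * l1 + (m : ℂ) * (gam3 * l1)}

/-- The Weierstrass function of the triangular lattice generated by `λ₁`. -/
noncomputable def wp (l1 : ℂ) (z : ℂ) : ℂ :=
  1 / z ^ 2 + ∑' p : ℤ × ℤ,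
    if p = 0 then 0
    else 1 / (z - ((p.1 : ℂ) * l1 + (p.2 : ℂ) * (gam3 * l1))) ^ 2
         - 1 / ((p.1 : ℂ) * l1 + (p.2 : ℂ) * (gam3 * l1)) ^ 2

/-- The derivative `℘′` of the Weierstrass function. -/
noncomputable def wp' (l1 : ℂ) (z : ℂ) : ℂ :=
  -2 * ∑' p : ℤ × ℤ, 1 / (z - ((p.1 : ℂ) * l1 + (p.2 : ℂ) * (gam3 * l1))) ^ 3

/-- The orbit of `c` under `g_β = β·℘`. -/
noncomputable def orb (l1 β c : ℂ) : ℕ → ℂ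
  | 0 => c
  | n + 1 => β * wp l1 (orb l1 β c n)


lemma gam3_eq : gam3 = Complex.exp (((2 * Real.pi / 3 : ℝ) : ℂ) * Complex.I) := by
  unfold gam3; push_cast; ring_nf

lemma gam3_re : gam3.re = -(1/2) := by
  rw [gam3_eq, Complex.exp_ofReal_mul_I_re]
  have : (2 * Real.pi / 3 : ℝ) = Real.pi - Real.pi / 3 := by ring
  rw [this, Real.cos_pi_sub, Real.cos_pi_div_three]

lemma gam3_normSq : Complex.normSq gam3 = 1 := by
  have h : ‖gam3‖ = 1 := by
    unfold gam3
    rw [Complex.norm_exp]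
    norm_num [Complex.div_re, Complex.normSq]
  rw [← Complex.sq_norm, h]; norm_num


/-- lattice point function -/
noncomputable def W (l1 : ℂ) (p : ℤ × ℤ) : ℂ := (p.1 : ℂ) * l1 + (p.2 : ℂ) * (gam3 * l1)

lemma norm_W_ge (l1 : ℂ) (p : ℤ × ℤ) :
    ‖l1‖ / 2 * (max |(p.1 : ℝ)| |(p.2 : ℝ)|) ≤ ‖W l1 p‖ := by
  have hW : W l1 p = ((p.1 : ℂ) + (p.2 : ℂ) * gam3) * l1 := by unfold W; ring
  have h1 : Complex.normSq ((p.1 : ℂ) + (p.2 : ℂ) * gam3)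
      = (p.1 : ℝ)^2 + 2 * p.1 * p.2 * gam3.re + (p.2 : ℝ)^2 * Complex.normSq gam3 := by
    simp [Complex.normSq_apply, Complex.add_re, Complex.add_im, Complex.mul_re, Complex.mul_im]
    ring
  rw [gam3_re, gam3_normSq] at h1
  set a : ℝ := (p.1 : ℝ); set b : ℝ := (p.2 : ℝ)
  have h2 : (max |a| |b|)^2 / 2 ≤ Complex.normSq ((p.1 : ℂ) + (p.2 : ℂ) * gam3) := by
    rw [h1]
    rcases max_cases |a| |b| with ⟨h, _⟩ | ⟨h, _⟩ <;> rw [h] <;> nlinarith [_root_.sq_abs a, _root_.sq_abs b]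
  have h3 : max |a| |b| / 2 ≤ ‖(p.1 : ℂ) + (p.2 : ℂ) * gam3‖ := by
    have hn : ‖(p.1 : ℂ) + (p.2 : ℂ) * gam3‖^2 = Complex.normSq _ := Complex.sq_norm _
    nlinarith [norm_nonneg ((p.1 : ℂ) + (p.2 : ℂ) * gam3), abs_nonneg a, abs_nonneg b,
      le_max_left |a| |b|, le_max_right |a| |b|]
  calc ‖l1‖ / 2 * max |a| |b| = (max |a| |b| / 2) * ‖l1‖ := by ring
    _ ≤ ‖(p.1 : ℂ) + (p.2 : ℂ) * gam3‖ * ‖l1‖ := by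
        apply mul_le_mul_of_nonneg_right h3 (norm_nonneg _)
    _ = ‖W l1 p‖ := by rw [hW, norm_mul]

lemma finite_W_le (l1 : ℂ) (hl1 : l1 ≠ 0) (M : ℝ) : {p : ℤ × ℤ | ‖W l1 p‖ ≤ M}.Finite := by
  have hl : 0 < ‖l1‖ := norm_pos_iff.mpr hl1
  set N : ℤ := ⌈2 * M / ‖l1‖⌉
  apply Set.Finite.subset (Set.finite_Icc ((-N, -N) : ℤ × ℤ) (N, N))
  intro p hp
  simp only [Set.mem_setOf_eq] at hp
  have hb := (norm_W_ge l1 p).trans hp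
  have hmn : (0:ℝ) ≤ max |(p.1 : ℝ)| |(p.2 : ℝ)| := le_trans (abs_nonneg _) (le_max_left _ _)
  have h1 : max |(p.1 : ℝ)| |(p.2 : ℝ)| ≤ 2 * M / ‖l1‖ := by
    rw [le_div_iff₀ hl]
    nlinarith
  have h2 : (|(p.1 : ℝ)|) ≤ (N : ℝ) := (le_max_left _ _).trans (h1.trans (Int.le_ceil _))
  have h3 : (|(p.2 : ℝ)|) ≤ (N : ℝ) := (le_max_right _ _).trans (h1.trans (Int.le_ceil _))
  rw [← Int.cast_abs] at h2 h3
  have h2' : |p.1| ≤ N := by exact_mod_cast h2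
  have h3' : |p.2| ≤ N := by exact_mod_cast h3
  rw [Set.mem_Icc]
  constructor <;> constructor <;> simp_all [abs_le, Prod.le_def] <;> omega

lemma W_eq_zero (l1 : ℂ) (hl1 : l1 ≠ 0) {p : ℤ × ℤ} (h : W l1 p = 0) : p = 0 := by
  have := norm_W_ge l1 p
  rw [h, norm_zero] at this
  have hl : 0 < ‖l1‖ := norm_pos_iff.mpr hl1
  have : max |(p.1 : ℝ)| |(p.2 : ℝ)| ≤ 0 := by nlinarith
  have h1 : |(p.1 : ℝ)| ≤ 0 := (le_max_left _ _).trans this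
  have h2 : |(p.2 : ℝ)| ≤ 0 := (le_max_right _ _).trans this
  have : p.1 = 0 := by exact_mod_cast abs_nonpos_iff.mp h1
  have : p.2 = 0 := by exact_mod_cast abs_nonpos_iff.mp h2
  ext <;> simp_all

lemma summable_inv_cube (l1 : ℂ) (hl1 : l1 ≠ 0) :
    Summable fun p : ℤ × ℤ => (‖W l1 p‖⁻¹) ^ 3 := by
  have hl : 0 < ‖l1‖ := norm_pos_iff.mpr hl1
  have hE := EisensteinSeries.summable_one_div_norm_rpow (k := 3) (by norm_num)
  have hE2 : Summable fun p : ℤ × ℤ => ‖(finTwoArrowEquiv ℤ).symm p‖ ^ (-(3:ℝ)) :=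
    ((finTwoArrowEquiv ℤ).symm.summable_iff).mpr hE
  apply Summable.of_norm_bounded_eventually (g := fun p => (2/‖l1‖)^3 * ‖(finTwoArrowEquiv ℤ).symm p‖ ^ (-(3:ℝ))) (hE2.mul_left _)
  filter_upwards [(Set.finite_singleton (0 : ℤ × ℤ)).compl_mem_cofinite] with p hp
  have hp0 : p ≠ 0 := by simpa using hp
  have hmax : ‖(finTwoArrowEquiv ℤ).symm p‖ = max |(p.1 : ℝ)| |(p.2 : ℝ)| := by
    rw [EisensteinSeries.norm_eq_max_natAbs]
    simp [finTwoArrowEquiv, Nat.cast_natAbs, Nat.cast_max]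
  have hmaxpos : 0 < max |(p.1 : ℝ)| |(p.2 : ℝ)| := by
    by_contra hc
    push_neg at hc
    have h1 : |(p.1 : ℝ)| ≤ 0 := (le_max_left _ _).trans hc
    have h2 : |(p.2 : ℝ)| ≤ 0 := (le_max_right _ _).trans hc
    have e1 : p.1 = 0 := by exact_mod_cast abs_nonpos_iff.mp h1
    have e2 : p.2 = 0 := by exact_mod_cast abs_nonpos_iff.mp h2
    exact hp0 (by ext <;> simp_all)
  have hWpos : 0 < ‖W l1 p‖ := by
    have := norm_W_ge l1 p; nlinarith
  set M := max |(p.1 : ℝ)| |(p.2 : ℝ)| with hM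
  have hrw : ‖(finTwoArrowEquiv ℤ).symm p‖ ^ (-(3:ℝ)) = (M⁻¹)^3 := by
    rw [hmax, Real.rpow_neg hmaxpos.le, show ((3:ℝ)) = ((3:ℕ):ℝ) by norm_num,
      Real.rpow_natCast, inv_pow]
  rw [hrw, ← mul_pow]
  have key : ‖W l1 p‖⁻¹ ≤ 2/‖l1‖ * M⁻¹ := by
    have h1 : ‖l1‖/2 * M ≤ ‖W l1 p‖ := norm_W_ge l1 p
    have h2 : ‖W l1 p‖⁻¹ ≤ (‖l1‖/2 * M)⁻¹ := by
      apply inv_anti₀ (by positivity) h1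
    calc ‖W l1 p‖⁻¹ ≤ (‖l1‖/2 * M)⁻¹ := h2
      _ = 2/‖l1‖ * M⁻¹ := by field_simp
  have hnn : (0:ℝ) ≤ ‖W l1 p‖⁻¹ := by positivity
  calc ‖(‖W l1 p‖⁻¹)^3‖ = (‖W l1 p‖⁻¹)^3 := by exact _root_.abs_of_nonneg (by positivity)
    _ ≤ (2/‖l1‖ * M⁻¹)^3 := by apply pow_le_pow_left₀ hnn key


lemma W_zero (l1 : ℂ) : W l1 0 = 0 := by simp [W]

lemma hasDerivAt_wp (l1 : ℂ) (hl1 : l1 ≠ 0) (z₀ : ℂ) (hz₀ : z₀ ∉ lattice l1) :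
    HasDerivAt (wp l1) (wp' l1 z₀) z₀ := by
  classical
  have hzW : ∀ p : ℤ × ℤ, z₀ ≠ W l1 p := by
    intro p h
    exact hz₀ ⟨p.1, p.2, h⟩
  have hz0 : z₀ ≠ 0 := by simpa [W_zero] using hzW 0
  -- the finite set of nearby lattice points
  set S : Set (ℤ × ℤ) := {p | ‖W l1 p‖ ≤ ‖z₀‖ + 1} with hS
  have hSfin : S.Finite := finite_W_le l1 hl1 _
  have h0S : (0 : ℤ × ℤ) ∈ S := by simp [hS, W_zero]; positivity
  set δ₀ : ℝ := hSfin.toFinset.inf' ⟨0, hSfin.mem_toFinset.mpr h0S⟩ (fun p => ‖z₀ - W l1 p‖)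
    with hδ₀
  have hδ₀pos : 0 < δ₀ := by
    rw [hδ₀]
    apply (Finset.lt_inf'_iff _).mpr
    intro p _
    rw [norm_pos_iff, sub_ne_zero]
    exact hzW p
  set δ : ℝ := min 1 δ₀ with hδ
  have hδpos : 0 < δ := lt_min one_pos hδ₀pos
  have hδ1 : δ ≤ 1 := min_le_left _ _
  -- uniform lower bounds on the ball
  have key1 : ∀ z ∈ Metric.ball z₀ (δ/2), ∀ p : ℤ × ℤ, δ/2 ≤ ‖z - W l1 p‖ := by
    intro z hz p
    have hzz : ‖z - z₀‖ < δ/2 := by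
      rw [Metric.mem_ball, dist_eq_norm] at hz; exact hz
    by_cases hpS : p ∈ S
    · have h1 : δ₀ ≤ ‖z₀ - W l1 p‖ :=
        Finset.inf'_le _ (hSfin.mem_toFinset.mpr hpS)
      have h2 : δ ≤ ‖z₀ - W l1 p‖ := le_trans (min_le_right _ _) h1
      have : ‖z₀ - W l1 p‖ ≤ ‖z₀ - z‖ + ‖z - W l1 p‖ := by
        calc ‖z₀ - W l1 p‖ = ‖(z₀ - z) + (z - W l1 p)‖ := by ring_nf
          _ ≤ _ := norm_add_le _ _
      have hzz' : ‖z₀ - z‖ < δ/2 := by rwa [norm_sub_rev]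
      linarith
    · have h1 : ‖z₀‖ + 1 < ‖W l1 p‖ := by
        simp only [hS, Set.mem_setOf_eq, not_le] at hpS; exact hpS
      have h2 : ‖W l1 p‖ - ‖z‖ ≤ ‖z - W l1 p‖ := by
        rw [norm_sub_rev]; exact norm_sub_norm_le _ _
      have h3 : ‖z‖ ≤ ‖z₀‖ + δ/2 := by
        calc ‖z‖ = ‖z₀ + (z - z₀)‖ := by ring_nf
          _ ≤ ‖z₀‖ + ‖z - z₀‖ := norm_add_le _ _
          _ ≤ ‖z₀‖ + δ/2 := by linarith
      linarith
  have key2 : ∀ z ∈ Metric.ball z₀ (δ/2), ∀ p ∉ S, ‖W l1 p‖ - ‖z₀‖ - 1/2 ≤ ‖z - W l1 p‖ := by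
    intro z hz p hpS
    have hzz : ‖z - z₀‖ < δ/2 := by rw [Metric.mem_ball, dist_eq_norm] at hz; exact hz
    have h3 : ‖z‖ ≤ ‖z₀‖ + δ/2 := by
      calc ‖z‖ = ‖z₀ + (z - z₀)‖ := by ring_nf
        _ ≤ ‖z₀‖ + ‖z - z₀‖ := norm_add_le _ _
        _ ≤ ‖z₀‖ + δ/2 := by linarith
    have h2 : ‖W l1 p‖ - ‖z‖ ≤ ‖z - W l1 p‖ := by
      rw [norm_sub_rev]; exact norm_sub_norm_le _ _
    linarith
  -- bound function
  set u : ℤ × ℤ → ℝ := fun p => if p ∈ S then 2/(δ/2)^3 else 2/(‖W l1 p‖ - ‖z₀‖ - 1/2)^3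
    with hu_def
  have hdenpos : ∀ p ∉ S, (0:ℝ) < ‖W l1 p‖ - ‖z₀‖ - 1/2 := by
    intro p hpS
    have h1 : ‖z₀‖ + 1 < ‖W l1 p‖ := by
      simp only [hS, Set.mem_setOf_eq, not_le] at hpS; exact hpS
    linarith
  have hu_nonneg : ∀ p, 0 ≤ u p := by
    intro p
    simp only [hu_def]
    by_cases hpS : p ∈ S
    · rw [if_pos hpS]; positivity
    · rw [if_neg hpS]
      have := hdenpos p hpS
      positivity
  have hball : z₀ ∈ Metric.ball z₀ (δ/2) := Metric.mem_ball_self (by linarith)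
  have hu : Summable u := by
    apply Summable.of_norm_bounded_eventually (g := fun p => 16 * (‖W l1 p‖⁻¹)^3)
      ((summable_inv_cube l1 hl1).mul_left 16)
    have hfin : ({p : ℤ × ℤ | ‖W l1 p‖ ≤ 2*‖z₀‖ + 1} ∪ S).Finite :=
      (finite_W_le l1 hl1 _).union hSfin
    filter_upwards [hfin.compl_mem_cofinite] with p hp
    rw [Set.mem_compl_iff, Set.mem_union, not_or] at hp
    obtain ⟨hp1, hpS⟩ := hp
    rw [Set.mem_setOf_eq, not_le] at hp1
    have hWpos : (0:ℝ) < ‖W l1 p‖ := by linarith [norm_nonneg z₀]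
    have hD : ‖W l1 p‖/2 ≤ ‖W l1 p‖ - ‖z₀‖ - 1/2 := by linarith [norm_nonneg z₀]
    have hu_eq : u p = 2/(‖W l1 p‖ - ‖z₀‖ - 1/2)^3 := by simp only [hu_def]; rw [if_neg hpS]
    rw [Real.norm_eq_abs, _root_.abs_of_nonneg (hu_nonneg p), hu_eq]
    calc 2/(‖W l1 p‖ - ‖z₀‖ - 1/2)^3 ≤ 2/(‖W l1 p‖/2)^3 := by
          exact div_le_div_of_nonneg_left (by norm_num) (pow_pos (by linarith) 3)
            (pow_le_pow_left₀ (by linarith) hD 3)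
      _ = 16 * (‖W l1 p‖⁻¹)^3 := by field_simp; ring
  -- the summand functions
  set f : ℤ × ℤ → ℂ → ℂ := fun p z => if p = 0 then 0
    else 1/(z - W l1 p)^2 - 1/(W l1 p)^2 with hf_def
  set f' : ℤ × ℤ → ℂ → ℂ := fun p z => if p = 0 then 0 else -2/(z - W l1 p)^3 with hf'_def
  have hWne : ∀ p : ℤ × ℤ, p ≠ 0 → W l1 p ≠ 0 := fun p hp h => hp (W_eq_zero l1 hl1 h)
  have hsubne : ∀ z ∈ Metric.ball z₀ (δ/2), ∀ p : ℤ × ℤ, z - W l1 p ≠ 0 := by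
    intro z hz p h
    have := key1 z hz p
    rw [h, norm_zero] at this
    linarith
  have hder : ∀ (p : ℤ × ℤ), ∀ z ∈ Metric.ball z₀ (δ/2), HasDerivAt (f p) (f' p z) z := by
    intro p z hz
    by_cases hp0 : p = 0
    · have h1 : f p = fun _ => (0:ℂ) := by funext w; simp only [hf_def]; simp [hp0]
      have h2 : f' p z = 0 := by simp only [hf'_def]; simp [hp0]
      rw [h1, h2]; exact hasDerivAt_const _ _
    · have hne := hsubne z hz p
      have hbase : HasDerivAt (fun w : ℂ => (w - W l1 p)^2) (2*(z - W l1 p)) z := by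
        have := ((hasDerivAt_id z).sub_const (W l1 p)).pow 2
        refine this.congr_deriv ?_
        simp
      have h1 := (hbase.inv (pow_ne_zero 2 hne)).sub_const (1/(W l1 p)^2)
      have h2 : f p = fun w => ((w - W l1 p)^2)⁻¹ - 1/(W l1 p)^2 := by
        funext w; simp only [hf_def]; simp [hp0, one_div]
      rw [h2]
      refine h1.congr_deriv ?_
      simp only [hf'_def]; simp only [if_neg hp0]
      field_simp
  have hGbound : ∀ z ∈ Metric.ball z₀ (δ/2), ∀ p : ℤ × ℤ, 2/‖z - W l1 p‖^3 ≤ u p := by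
    intro z hz p
    by_cases hpS : p ∈ S
    · have hk := key1 z hz p
      have : u p = 2/(δ/2)^3 := by simp only [hu_def]; rw [if_pos hpS]
      rw [this]
      exact div_le_div_of_nonneg_left (by norm_num) (pow_pos (by linarith) 3)
        (pow_le_pow_left₀ (by linarith) hk 3)
    · have hk := key2 z hz p hpS
      have hd := hdenpos p hpS
      have : u p = 2/(‖W l1 p‖ - ‖z₀‖ - 1/2)^3 := by simp only [hu_def]; rw [if_neg hpS]
      rw [this]
      exact div_le_div_of_nonneg_left (by norm_num) (pow_pos (by linarith) 3)
        (pow_le_pow_left₀ (by linarith) hk 3)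
  have hbound : ∀ (p : ℤ × ℤ), ∀ z ∈ Metric.ball z₀ (δ/2), ‖f' p z‖ ≤ u p := by
    intro p z hz
    by_cases hp0 : p = 0
    · have h2 : f' p z = 0 := by simp only [hf'_def]; simp [hp0]
      rw [h2, norm_zero]; exact hu_nonneg p
    · have h2 : f' p z = -2/(z - W l1 p)^3 := by simp only [hf'_def]; simp [hp0]
      rw [h2]
      have : ‖(-2 : ℂ)/(z - W l1 p)^3‖ = 2/‖z - W l1 p‖^3 := by
        rw [norm_div, norm_pow, norm_neg]
        norm_num
      rw [this]
      exact hGbound z hz p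
  have hsum0 : Summable (fun p => f p z₀) := by
    apply Summable.of_norm_bounded_eventually (g := fun p => (12 * ‖z₀‖ + 1) * (‖W l1 p‖⁻¹)^3)
      (((summable_inv_cube l1 hl1)).mul_left _)
    have hfin : ({p : ℤ × ℤ | ‖W l1 p‖ ≤ 2*‖z₀‖ + 1} ∪ {0}).Finite :=
      (finite_W_le l1 hl1 _).union (Set.finite_singleton _)
    filter_upwards [hfin.compl_mem_cofinite] with p hp
    rw [Set.mem_compl_iff, Set.mem_union, not_or] at hp
    obtain ⟨hp1, hp0'⟩ := hp
    have hp0 : p ≠ 0 := by simpa using hp0'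
    rw [Set.mem_setOf_eq, not_le] at hp1
    have hWpos : (0:ℝ) < ‖W l1 p‖ := by linarith [norm_nonneg z₀]
    have hWne' : W l1 p ≠ 0 := hWne p hp0
    have hzsub : z₀ - W l1 p ≠ 0 := sub_ne_zero.mpr (hzW p)
    have hfeq : f p z₀ = z₀ * (2 * W l1 p - z₀) / ((z₀ - W l1 p)^2 * (W l1 p)^2) := by
      simp only [hf_def]; simp only [if_neg hp0]
      field_simp
      ring
    rw [hfeq]
    have hz₀W : ‖z₀‖ ≤ ‖W l1 p‖ := by linarith [norm_nonneg z₀]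
    have hnum : ‖z₀ * (2 * W l1 p - z₀)‖ ≤ ‖z₀‖ * (3 * ‖W l1 p‖) := by
      rw [norm_mul]
      apply mul_le_mul_of_nonneg_left _ (norm_nonneg _)
      calc ‖2 * W l1 p - z₀‖ ≤ ‖2 * W l1 p‖ + ‖z₀‖ := norm_sub_le _ _
        _ = 2 * ‖W l1 p‖ + ‖z₀‖ := by rw [norm_mul]; norm_num
        _ ≤ 3 * ‖W l1 p‖ := by linarith
    have hden : ‖W l1 p‖^4/4 ≤ ‖(z₀ - W l1 p)^2 * (W l1 p)^2‖ := by
      rw [norm_mul, norm_pow, norm_pow]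
      have h1 : ‖W l1 p‖/2 ≤ ‖z₀ - W l1 p‖ := by
        rw [norm_sub_rev]
        have := norm_sub_norm_le (W l1 p) z₀
        linarith
      have h2 : (‖W l1 p‖/2)^2 ≤ ‖z₀ - W l1 p‖^2 := by
        apply pow_le_pow_left₀ (by positivity) h1
      nlinarith [norm_nonneg (W l1 p), norm_nonneg (z₀ - W l1 p)]
    rw [norm_div]
    calc ‖z₀ * (2 * W l1 p - z₀)‖ / ‖(z₀ - W l1 p)^2 * (W l1 p)^2‖
        ≤ (‖z₀‖ * (3 * ‖W l1 p‖)) / (‖W l1 p‖^4/4) := by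
          apply div_le_div₀ (by positivity) hnum (by positivity) hden
      _ = 12 * ‖z₀‖ * (‖W l1 p‖⁻¹)^3 := by
          rw [inv_pow, ← div_eq_mul_inv,
            div_eq_div_iff (by positivity : (‖W l1 p‖^4/4) ≠ 0)
              (by positivity : (‖W l1 p‖^3) ≠ 0)]
          ring
      _ ≤ (12 * ‖z₀‖ + 1) * (‖W l1 p‖⁻¹)^3 := by
          apply mul_le_mul_of_nonneg_right (by linarith [norm_nonneg z₀]) (by positivity)
  have main : HasDerivAt (fun z => ∑' p, f p z) (∑' p, f' p z₀) z₀ :=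
    hasDerivAt_tsum_of_isPreconnected hu Metric.isOpen_ball
      ((convex_ball z₀ (δ/2)).isPreconnected) hder hbound hball hsum0 hball
  have hhead : HasDerivAt (fun z : ℂ => 1/z^2) (-2/z₀^3) z₀ := by
    have h1 := (hasDerivAt_pow 2 z₀).inv (pow_ne_zero 2 hz0)
    have h2 : (fun z : ℂ => 1/z^2) = fun z : ℂ => (z^2)⁻¹ := by funext z; rw [one_div]
    rw [h2]
    refine h1.congr_deriv ?_
    field_simp
    ring
  have htotal := hhead.add main
  have hwp_eq : wp l1 = fun z => 1/z^2 + ∑' p, f p z := by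
    funext z
    rw [wp, hf_def]
    rfl
  rw [hwp_eq]
  -- identify the derivative with wp'
  set G : ℤ × ℤ → ℂ := fun p => -2/(z₀ - W l1 p)^3 with hG_def
  have hGs : Summable G := by
    apply Summable.of_norm_bounded (g := u) hu
    intro p
    have : ‖G p‖ = 2/‖z₀ - W l1 p‖^3 := by
      simp only [hG_def]; rw [norm_div, norm_pow, norm_neg]; norm_num
    rw [this]
    exact hGbound z₀ hball p
  have hsplit : ∑' p, G p = G 0 + ∑' p, (if p = 0 then 0 else G p) := hGs.tsum_eq_add_tsum_ite 0
  have hG0 : G 0 = -2/z₀^3 := by simp only [hG_def]; simp [W_zero]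
  have hite : (fun p => if p = 0 then (0:ℂ) else G p) = fun p => f' p z₀ := by
    funext p
    rw [hf'_def, hG_def]
  have hwp' : wp' l1 z₀ = -2/z₀^3 + ∑' p, f' p z₀ := by
    rw [wp']
    have hGW : (fun p : ℤ × ℤ => 1 / (z₀ - ((p.1:ℂ) * l1 + (p.2:ℂ) * (gam3 * l1))) ^ 3)
        = fun p => 1/(z₀ - W l1 p)^3 := rfl
    rw [hGW]
    have h1 : ∑' p, G p = -2 * ∑' p : ℤ × ℤ, 1/(z₀ - W l1 p)^3 := by
      rw [← tsum_mul_left]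
      congr 1
      funext p
      rw [hG_def, mul_one_div]
    rw [← h1, hsplit, hG0, hite]
  rw [hwp']
  exact htotal


theorem stmt6 (l1 : ℂ) (hl1 : l1 ≠ 0) (n : ℕ) (hn : 2 ≤ n)
    (β0 : ℂ) (hβ0 : β0 ≠ 0)
    (hdef : ∀ k : ℕ, 1 ≤ k → k ≤ n - 1 → orb l1 β0 (l1 / 2) k ∉ lattice l1)
    (hne : ∀ k : ℕ, 1 ≤ k → k ≤ n - 1 → wp' l1 (orb l1 β0 (l1 / 2) k) ≠ 0) :
    HasDerivAt (fun β => orb l1 β (l1 / 2) n)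
      (1 / β0 * (∏ k ∈ Finset.Icc 1 (n - 1), β0 * wp' l1 (orb l1 β0 (l1 / 2) k)) *
        (orb l1 β0 (l1 / 2) 1 +
          ∑ k ∈ Finset.Icc 2 n, orb l1 β0 (l1 / 2) k /
            ∏ i ∈ Finset.Icc 1 (k - 1), (β0 * wp' l1 (orb l1 β0 (l1 / 2) i)))) β0 := by
  set c : ℂ := l1 / 2 with hc
  set x : ℕ → ℂ := fun k => orb l1 β0 c k with hx
  set P : ℕ → ℂ := fun j => ∏ i ∈ Finset.Icc 1 j, (β0 * wp' l1 (x i)) with hP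
  have hPne : ∀ j, j ≤ n - 1 → P j ≠ 0 := by
    intro j hj
    rw [hP]
    apply Finset.prod_ne_zero_iff.mpr
    intro i hi
    rw [Finset.mem_Icc] at hi
    exact mul_ne_zero hβ0 (hne i hi.1 (hi.2.trans hj))
  have claim : ∀ m : ℕ, 1 ≤ m → m ≤ n →
      HasDerivAt (fun β => orb l1 β c m)
        (1 / β0 * P (m - 1) * (x 1 + ∑ k ∈ Finset.Icc 2 m, x k / P (k - 1))) β0 := by
    intro m hm1
    induction m, hm1 using Nat.le_induction with
    | base =>
      intro _
      have h1 : (fun β => orb l1 β c 1) = fun β => β * wp l1 c := by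
        funext β; rfl
      have h2 : HasDerivAt (fun β : ℂ => β * wp l1 c) (wp l1 c) β0 := by
        simpa using (hasDerivAt_id β0).mul_const (wp l1 c)
      rw [h1]
      convert h2 using 1
      have hx1 : x 1 = β0 * wp l1 c := rfl
      simp [hP, hx1]
      field_simp
    | succ m hm ih =>
      intro hm1n
      have hmn1 : m ≤ n - 1 := by omega
      have hmn : m ≤ n := by omega
      have ihm := ih hmn
      have hxm := hdef m hm hmn1
      have hwpd := hasDerivAt_wp l1 hl1 (x m) hxm
      have hcomp : HasDerivAt (fun β => wp l1 (orb l1 β c m))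
          (wp' l1 (x m) * (1 / β0 * P (m - 1) * (x 1 + ∑ k ∈ Finset.Icc 2 m, x k / P (k - 1))))
          β0 := by exact hwpd.comp β0 ihm
      have hmul := (hasDerivAt_id β0).mul hcomp
      have hfun : (fun β => orb l1 β c (m + 1)) = fun β => β * wp l1 (orb l1 β c m) := by
        funext β; rfl
      rw [hfun]
      refine hmul.congr_deriv ?_
      -- algebraic identity
      obtain ⟨j, rfl⟩ : ∃ j, m = j + 1 := ⟨m - 1, by omega⟩
      have hPj : P (j + 1) = P j * (β0 * wp' l1 (x (j + 1))) := by
        rw [hP]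
        exact Finset.prod_Icc_succ_top (by omega) _
      have hsum : ∑ k ∈ Finset.Icc 2 (j + 1 + 1), x k / P (k - 1)
          = (∑ k ∈ Finset.Icc 2 (j + 1), x k / P (k - 1)) + x (j + 2) / P (j + 1) := by
        exact Finset.sum_Icc_succ_top (by omega) _
      have hxm1 : x (j + 2) = β0 * wp l1 (x (j + 1)) := rfl
      have hPjne : P j ≠ 0 := hPne j (by omega)
      have hqne : β0 * wp' l1 (x (j + 1)) ≠ 0 := mul_ne_zero hβ0 (hne (j+1) (by omega) hmn1)
      simp only [Nat.add_sub_cancel]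
      rw [hsum, hPj, hxm1]
      rw [show orb l1 β0 c (j + 1) = x (j + 1) from rfl, ← add_assoc]
      simp only [id_eq]
      set A := x 1 + ∑ k ∈ Finset.Icc 2 (j + 1), x k / P (k - 1)
      set q := wp' l1 (x (j + 1))
      have hq : q ≠ 0 := by
        intro h; apply hqne; rw [h, mul_zero]
      field_simp
      ring
  exact claim n (by omega) le_rfl
end

section
/- There exist r ∈ (0,1/2), ε > 0, ρ > 0 and φ ∈ ℝ such that for every β ∈ B(1,r) and every b ∈ Λ, the set {z ∈ ℂ : |z| ≥ ρ and arg z ∈ [φ − π/8, φ + 9π/8] (mod 2π)} is contained in the image g_β(U(b,ε)∖{b}), where U(b,ε) = {z ∈ ℂ : |z−b| ≤ ε and −3π/8 ≤ Arg(z−b) ≤ 3π/8}. -/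
open Complex Filter
open scoped ENNReal

/-- The sector `U(b,ε)` about the lattice point `b`. -/
def sector (b : ℂ) (ε : ℝ) : Set ℂ :=
  {z | ‖z - b‖ ≤ ε ∧
       -(3 * Real.pi / 8) ≤ Complex.arg (z - b) ∧ Complex.arg (z - b) ≤ 3 * Real.pi / 8}

namespace S14

lemma gam3_eq : gam3 = Complex.exp ((2 * Real.pi / 3 : ℝ) * I) := by
  unfold gam3; congr 1; push_cast; ring

lemma gam3_re : gam3.re = -(1/2) := by
  rw [gam3_eq, Complex.exp_ofReal_mul_I_re,
    show 2 * Real.pi / 3 = Real.pi - Real.pi / 3 by ring, Real.cos_pi_sub,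
    Real.cos_pi_div_three]

lemma gam3_im : gam3.im = Real.sqrt 3 / 2 := by
  rw [gam3_eq, Complex.exp_ofReal_mul_I_im,
    show 2 * Real.pi / 3 = Real.pi - Real.pi / 3 by ring, Real.sin_pi_sub,
    Real.sin_pi_div_three]

noncomputable def w (l1 : ℂ) (p : ℤ × ℤ) : ℂ := (p.1 : ℂ) * l1 + (p.2 : ℂ) * (gam3 * l1)

noncomputable def na (p : ℤ × ℤ) : ℝ := ((max p.1.natAbs p.2.natAbs : ℕ) : ℝ)

lemma na_nonneg (p : ℤ × ℤ) : 0 ≤ na p := Nat.cast_nonneg _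

lemma na_eq (p : ℤ × ℤ) : na p = max |(p.1 : ℝ)| |(p.2 : ℝ)| := by
  unfold na
  rw [Nat.cast_max]
  congr 1 <;> rw [Nat.cast_natAbs] <;> push_cast <;> ring

lemma na_zero : na 0 = 0 := by simp [na]

lemma one_le_na {p : ℤ × ℤ} (hp : p ≠ 0) : 1 ≤ na p := by
  unfold na
  have : 1 ≤ max p.1.natAbs p.2.natAbs := by
    by_contra h
    push_neg at h
    interval_cases h1 : max p.1.natAbs p.2.natAbs
    · apply hp
      have h1 := h1
      rw [Nat.max_eq_zero_iff] at h1
      have := Int.natAbs_eq_zero.1 h1.1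
      have := Int.natAbs_eq_zero.1 h1.2
      exact Prod.ext (by assumption) (by assumption)
  exact_mod_cast this

lemma normSq_val (X Y : ℝ) : Complex.normSq ((X : ℂ) + (Y : ℂ) * gam3) = X^2 - X*Y + Y^2 := by
  have h3 : (Real.sqrt 3) ^ 2 = 3 := Real.sq_sqrt (by norm_num)
  simp only [Complex.normSq_apply, Complex.add_re, Complex.add_im, Complex.ofReal_re,
    Complex.ofReal_im, Complex.re_ofReal_mul, Complex.im_ofReal_mul, gam3_re, gam3_im]
  nlinarith [h3]

lemma abs_w_ge (l1 : ℂ) (p : ℤ × ℤ) :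
    ‖l1‖ / Real.sqrt 2 * na p ≤ ‖w l1 p‖ := by
  have hw : w l1 p = l1 * ((p.1 : ℂ) + (p.2 : ℂ) * gam3) := by unfold w; ring
  rw [hw, norm_mul, na_eq]
  set X := (p.1 : ℝ); set Y := (p.2 : ℝ)
  have h2 : (Real.sqrt 2) ^ 2 = 2 := Real.sq_sqrt (by norm_num)
  have hs2 : 0 < Real.sqrt 2 := Real.sqrt_pos.2 (by norm_num)
  have habs : (‖(X:ℂ) + (Y:ℂ) * gam3‖)^2 = X^2 - X*Y + Y^2 := by
    rw [Complex.sq_norm, normSq_val]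
  have hmax : (max |X| |Y|)^2 ≤ 2 * (X^2 - X*Y + Y^2) := by
    rcases max_cases |X| |Y| with ⟨h, _⟩ | ⟨h, _⟩ <;> rw [h] <;> nlinarith [_root_.sq_abs X, _root_.sq_abs Y, sq_nonneg (X - Y)]
  have hL : 0 ≤ ‖l1‖ / Real.sqrt 2 * max |X| |Y| := by positivity
  have hsq : (‖l1‖ / Real.sqrt 2 * max |X| |Y|)^2 ≤
      (‖l1‖ * ‖(X:ℂ) + (Y:ℂ) * gam3‖)^2 := by
    rw [mul_pow, mul_pow, div_pow, habs, h2]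
    rw [div_mul_eq_mul_div, div_le_iff₀ (by norm_num)]
    nlinarith [sq_nonneg (‖l1‖), sq_nonneg (max |X| |Y|)]
  calc ‖l1‖ / Real.sqrt 2 * max |X| |Y|
      = Real.sqrt ((‖l1‖ / Real.sqrt 2 * max |X| |Y|)^2) := (Real.sqrt_sq hL).symm
    _ ≤ Real.sqrt ((‖l1‖ * ‖(X:ℂ) + (Y:ℂ) * gam3‖)^2) := Real.sqrt_le_sqrt hsq
    _ = _ := Real.sqrt_sq (by positivity)

lemma sum_na : Summable (fun p : ℤ × ℤ => ((na p)^3)⁻¹) := by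
  have h := EisensteinSeries.summable_one_div_norm_rpow (k := 3) (by norm_num)
  have h2 := ((finTwoArrowEquiv ℤ).symm.summable_iff
    (f := fun x : Fin 2 → ℤ => ‖x‖ ^ (-3 : ℝ))).2 h
  refine h2.congr fun p => ?_
  have : ‖(finTwoArrowEquiv ℤ).symm p‖ = na p := by
    rw [show (finTwoArrowEquiv ℤ).symm p = ![p.1, p.2] from congrFun (finTwoArrowEquiv_symm_apply ℤ) p,
      EisensteinSeries.norm_eq_max_natAbs]
    simp [na]
  simp only [Function.comp_apply, this]
  rw [Real.rpow_neg (na_nonneg p), show (3:ℝ) = ((3:ℕ):ℝ) by norm_num, Real.rpow_natCast]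

noncomputable def WB (l1 : ℂ) (p : ℤ × ℤ) : ℝ :=
  if p = 0 then 0 else ((‖w l1 p‖)^3)⁻¹

lemma WB_nonneg (l1 : ℂ) (p : ℤ × ℤ) : 0 ≤ WB l1 p := by
  unfold WB; split <;> positivity

lemma abs_w_pos {l1 : ℂ} (hl1 : l1 ≠ 0) {p : ℤ × ℤ} (hp : p ≠ 0) :
    ‖l1‖ / Real.sqrt 2 ≤ ‖w l1 p‖ := by
  have h := abs_w_ge l1 p
  have h1 := one_le_na hp
  have hc : 0 < ‖l1‖ / Real.sqrt 2 := by
    have : 0 < ‖l1‖ := norm_pos_iff.mpr hl1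
    positivity
  nlinarith

lemma sum_WB {l1 : ℂ} (hl1 : l1 ≠ 0) : Summable (WB l1) := by
  set c := ‖l1‖ / Real.sqrt 2 with hc
  have hcpos : 0 < c := by
    have : 0 < ‖l1‖ := norm_pos_iff.mpr hl1
    positivity
  apply Summable.of_nonneg_of_le (WB_nonneg l1) (f := fun p => (c^3)⁻¹ * ((na p)^3)⁻¹)
  · intro p
    unfold WB
    split
    · next h => subst h; rw [na_zero]; norm_num
    · next h =>
      have h1 := one_le_na h
      have h2 := abs_w_ge l1 p
      have hna : 0 < na p := by linarith
      rw [← mul_inv]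
      apply inv_anti₀ (by positivity)
      calc c^3 * na p^3 = (c * na p)^3 := by ring
        _ ≤ (‖w l1 p‖)^3 := by
            apply pow_le_pow_left₀ (by positivity) h2
  · exact sum_na.mul_left _

lemma w_add (l1 : ℂ) (p q : ℤ × ℤ) : w l1 (p + q) = w l1 p + w l1 q := by
  unfold w
  simp only [Prod.fst_add, Prod.snd_add]
  push_cast
  ring

lemma w_zero (l1 : ℂ) : w l1 0 = 0 := by simp [w]

lemma w_neg (l1 : ℂ) (p : ℤ × ℤ) : w l1 (-p) = -w l1 p := by
  unfold w
  simp only [Prod.fst_neg, Prod.snd_neg]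
  push_cast
  ring

lemma diff_bound {a b q : ℂ} (hq : q ≠ 0) (ha : ‖a‖ ≤ ‖q‖ / 2)
    (hb : ‖b‖ ≤ ‖q‖ / 2) :
    ‖1 / (a - q) ^ 2 - 1 / (b - q) ^ 2‖ ≤
      48 * ‖a - b‖ * ((‖q‖)^3)⁻¹ := by
  have hq0 : 0 < ‖q‖ := norm_pos_iff.mpr hq
  have hA : ‖q‖ / 2 ≤ ‖a - q‖ := by
    have h1 : ‖q‖ ≤ ‖q - a‖ + ‖a‖ := by
      calc ‖q‖ = ‖(q - a) + a‖ := by ring_nf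
        _ ≤ _ := norm_add_le _ _
    have h2 : ‖q - a‖ = ‖a - q‖ := norm_sub_rev _ _
    linarith
  have hB : ‖q‖ / 2 ≤ ‖b - q‖ := by
    have h1 : ‖q‖ ≤ ‖q - b‖ + ‖b‖ := by
      calc ‖q‖ = ‖(q - b) + b‖ := by ring_nf
        _ ≤ _ := norm_add_le _ _
    have h2 : ‖q - b‖ = ‖b - q‖ := norm_sub_rev _ _
    linarith
  have hA0 : a - q ≠ 0 := by
    intro h; rw [h] at hA; simp at hA; linarith
  have hB0 : b - q ≠ 0 := by
    intro h; rw [h] at hB; simp at hB; linarith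
  have key : 1 / (a - q) ^ 2 - 1 / (b - q) ^ 2
      = ((b - a) * ((a - q) + (b - q))) / ((a - q) ^ 2 * (b - q) ^ 2) := by
    field_simp
    ring
  rw [key, norm_div, norm_mul, norm_mul, norm_pow, norm_pow]
  have h1 : ‖(a - q) + (b - q)‖ ≤ 3 * ‖q‖ := by
    calc ‖(a - q) + (b - q)‖ ≤ ‖a - q‖ + ‖b - q‖ :=
          norm_add_le _ _
      _ ≤ (‖a‖ + ‖q‖) + (‖b‖ + ‖q‖) := by
          have t1 : ‖a - q‖ ≤ ‖a‖ + ‖q‖ := by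
            simpa using norm_sub_le a q
          have t2 : ‖b - q‖ ≤ ‖b‖ + ‖q‖ := by
            simpa using norm_sub_le b q
          linarith
      _ ≤ 3 * ‖q‖ := by linarith
  have h2 : ‖b - a‖ = ‖a - b‖ := norm_sub_rev _ _
  have hden : (‖q‖ / 2)^2 * (‖q‖ / 2)^2
      ≤ ‖a - q‖^2 * ‖b - q‖^2 := by
    have := sq_nonneg (‖q‖ / 2)
    gcongr <;> linarith
  calc ‖b - a‖ * ‖a - q + (b - q)‖
        / (‖a - q‖ ^ 2 * ‖b - q‖ ^ 2)
      ≤ (‖a - b‖ * (3 * ‖q‖))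
        / ((‖q‖ / 2)^2 * (‖q‖ / 2)^2) := by
        apply div_le_div₀ (by positivity) _ (by positivity) hden
        rw [h2]
        exact mul_le_mul_of_nonneg_left h1 (norm_nonneg _)
    _ = 48 * ‖a - b‖ * ((‖q‖)^3)⁻¹ := by
        field_simp
        ring

lemma summable_main {l1 : ℂ} (hl1 : l1 ≠ 0) (f : ℤ × ℤ → ℂ) (D K : ℝ) (hD : 0 ≤ D) (hK : 0 ≤ K)
    (h : ∀ p : ℤ × ℤ, K < na p → ‖f p‖ ≤ D * ((‖w l1 p‖)^3)⁻¹) :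
    Summable f := by
  set s : Set (ℤ × ℤ) := {p | na p ≤ K} with hs
  have hfin : s.Finite := by
    apply Set.Finite.subset (Finset.finite_toSet
      (Finset.Icc ((-⌈K⌉, -⌈K⌉) : ℤ × ℤ) ((⌈K⌉, ⌈K⌉) : ℤ × ℤ)))
    intro p hp
    simp only [hs, Set.mem_setOf_eq] at hp
    rw [na_eq] at hp
    simp only [Finset.coe_Icc, Set.mem_Icc]
    have h1 : |(p.1 : ℝ)| ≤ K := le_trans (le_max_left _ _) hp
    have h2 : |(p.2 : ℝ)| ≤ K := le_trans (le_max_right _ _) hp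
    have hc : K ≤ (⌈K⌉ : ℝ) := Int.le_ceil K
    have h1' : |p.1| ≤ ⌈K⌉ := by
      have : |(p.1 : ℝ)| ≤ (⌈K⌉ : ℝ) := le_trans h1 hc
      exact_mod_cast (by push_cast; exact this : ((|p.1| : ℤ) : ℝ) ≤ ((⌈K⌉ : ℤ) : ℝ))
    have h2' : |p.2| ≤ ⌈K⌉ := by
      have : |(p.2 : ℝ)| ≤ (⌈K⌉ : ℝ) := le_trans h2 hc
      exact_mod_cast (by push_cast; exact this : ((|p.2| : ℤ) : ℝ) ≤ ((⌈K⌉ : ℤ) : ℝ))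
    rw [abs_le] at h1' h2'
    exact ⟨⟨h1'.1, h2'.1⟩, ⟨h1'.2, h2'.2⟩⟩
  rw [← hfin.summable_compl_iff]
  apply Summable.of_norm_bounded (g := fun q : ↥sᶜ => D * WB l1 q.1)
    (((sum_WB hl1).mul_left D).subtype _)
  rintro ⟨p, hp⟩
  simp only [Set.mem_compl_iff, hs, Set.mem_setOf_eq, not_le] at hp
  have hp0 : p ≠ 0 := by
    intro h0
    rw [h0, na_zero] at hp
    linarith
  simp only [Function.comp_apply]
  have := h p hp
  unfold WB
  rw [if_neg hp0]
  exact this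

noncomputable def B (l1 z : ℂ) (p : ℤ × ℤ) : ℂ :=
  if p = 0 then 0 else 1 / (z - w l1 p) ^ 2 - 1 / (w l1 p) ^ 2

lemma wp_eq (l1 z : ℂ) : wp l1 z = 1 / z ^ 2 + ∑' p, B l1 z p := rfl

lemma sum_B {l1 : ℂ} (hl1 : l1 ≠ 0) (z : ℂ) : Summable (B l1 z) := by
  set c := ‖l1‖ / Real.sqrt 2 with hc
  have hcpos : 0 < c := by
    have : 0 < ‖l1‖ := norm_pos_iff.mpr hl1
    positivity
  apply summable_main hl1 _ (48 * ‖z‖) (max 0 (2 * ‖z‖ / c))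
    (by positivity) (le_max_left _ _)
  intro p hp
  have hp0 : p ≠ 0 := by
    intro h0
    rw [h0, na_zero] at hp
    have := le_max_left (0:ℝ) (2 * ‖z‖ / c)
    linarith
  have hwge : c * na p ≤ ‖w l1 p‖ := abs_w_ge l1 p
  have hna : max 0 (2 * ‖z‖ / c) < na p := hp
  have hz2 : 2 * ‖z‖ < c * na p := by
    have h1 : 2 * ‖z‖ / c < na p := lt_of_le_of_lt (le_max_right _ _) hna
    calc 2 * ‖z‖ = (2 * ‖z‖ / c) * c := by field_simp
      _ < na p * c := by
          apply mul_lt_mul_of_pos_right h1 hcpos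
      _ = c * na p := mul_comm _ _
  have hw2 : 2 * ‖z‖ < ‖w l1 p‖ := lt_of_lt_of_le hz2 hwge
  have hwq : w l1 p ≠ 0 := by
    intro h0
    rw [h0] at hw2
    simp at hw2
    have := norm_nonneg z
    linarith
  have hB : B l1 z p = 1 / (z - w l1 p) ^ 2 - 1 / ((0:ℂ) - w l1 p) ^ 2 := by
    unfold B
    rw [if_neg hp0]
    congr 1
    rw [zero_sub, neg_pow]
    norm_num
  rw [hB]
  have := diff_bound hwq (a := z) (b := 0) (by linarith) (by simp; positivity)
  simpa using this

noncomputable def F (l1 z : ℂ) : ℂ := ∑' p, B l1 z p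

lemma wp_eq' (l1 z : ℂ) : wp l1 z = 1 / z ^ 2 + F l1 z := rfl

lemma F_zero (l1 : ℂ) : F l1 0 = 0 := by
  unfold F
  have : ∀ p : ℤ × ℤ, B l1 0 p = 0 := by
    intro p
    unfold B
    split
    · rfl
    · rw [zero_sub, neg_pow]
      norm_num
  simp [this]

/-- Lipschitz-type bound for `F` on the disk of radius `c/2`. -/
lemma F_lip {l1 : ℂ} (hl1 : l1 ≠ 0) {z z' : ℂ}
    (hz : ‖z‖ ≤ ‖l1‖ / Real.sqrt 2 / 2)
    (hz' : ‖z'‖ ≤ ‖l1‖ / Real.sqrt 2 / 2) :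
    ‖F l1 z - F l1 z'‖ ≤ 48 * ‖z - z'‖ *
      (∑' p, WB l1 p) := by
  set c := ‖l1‖ / Real.sqrt 2 with hc
  have hcpos : 0 < c := by
    have : 0 < ‖l1‖ := norm_pos_iff.mpr hl1
    positivity
  have hFsub : F l1 z - F l1 z' = ∑' p, (B l1 z p - B l1 z' p) := by
    unfold F
    exact (Summable.tsum_sub (sum_B hl1 z) (sum_B hl1 z')).symm
  rw [hFsub]
  rw [show (48 : ℝ) * ‖z - z'‖ * (∑' p, WB l1 p)
      = ∑' p, (48 * ‖z - z'‖ * WB l1 p) from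
    ((sum_WB hl1).tsum_mul_left (48 * ‖z - z'‖)).symm]
  apply tsum_of_norm_bounded (((sum_WB hl1).mul_left (48 * ‖z - z'‖)).hasSum)
  intro p
  rcases eq_or_ne p 0 with h0 | h0
  · subst h0
    simp [B, WB]
  · have hwq : w l1 p ≠ 0 := by
      intro hq
      have := abs_w_pos hl1 h0
      rw [hq] at this
      simp at this
      linarith
    have hwc : c ≤ ‖w l1 p‖ := abs_w_pos hl1 h0
    have hBd : B l1 z p - B l1 z' p = 1 / (z - w l1 p) ^ 2 - 1 / (z' - w l1 p) ^ 2 := by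
      unfold B
      rw [if_neg h0, if_neg h0]
      ring
    rw [hBd]
    have hb := diff_bound hwq (a := z) (b := z') (by linarith) (by linarith)
    unfold WB
    rw [if_neg h0]
    calc ‖1 / (z - w l1 p) ^ 2 - 1 / (z' - w l1 p) ^ 2‖
        ≤ 48 * ‖z - z'‖ * ((‖w l1 p‖)^3)⁻¹ := hb
      _ = _ := by ring

/-- Periodicity of `wp` with respect to the lattice. -/
lemma wp_periodic {l1 : ℂ} (hl1 : l1 ≠ 0) (p₀ : ℤ × ℤ) (ζ : ℂ) :
    wp l1 (ζ + w l1 p₀) = wp l1 ζ := by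
  rcases eq_or_ne p₀ 0 with h0 | h0
  · rw [h0, w_zero, add_zero]
  set b := w l1 p₀ with hb
  set A : ℤ × ℤ → ℂ := B l1 (ζ + b) with hA
  set Bf : ℤ × ℤ → ℂ := B l1 ζ with hBf
  have sumA : Summable A := sum_B hl1 _
  have sumBf : Summable Bf := sum_B hl1 _
  have sumA' : Summable (fun p => A (p + p₀)) :=
    ((Equiv.addRight p₀).summable_iff (f := A)).2 sumA
  set cf : ℤ × ℤ → ℂ := fun p =>
    if p = 0 then 1 / ζ ^ 2 - 1 / b ^ 2
    else if p = -p₀ then 1 / b ^ 2 - 1 / (ζ + b) ^ 2 else 0 with hcf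
  have sumcf : Summable cf := by
    apply summable_of_ne_finset_zero (s := {0, -p₀})
    intro p hp
    simp only [Finset.mem_insert, Finset.mem_singleton] at hp
    push_neg at hp
    simp only [hcf, if_neg hp.1, if_neg hp.2]
  set Sf : ℤ × ℤ → ℂ := fun p =>
    if p = 0 ∨ p + p₀ = 0 then 0 else 1 / (w l1 p) ^ 2 - 1 / (w l1 (p + p₀)) ^ 2 with hSf
  have hApx : ∀ p : ℤ × ℤ, p ≠ 0 →
      A p = 1 / (ζ + b - w l1 p) ^ 2 - 1 / (w l1 p) ^ 2 := by
    intro p hp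
    rw [hA]; unfold B; rw [if_neg hp]
  have hBpx : ∀ p : ℤ × ℤ, p ≠ 0 →
      Bf p = 1 / (ζ - w l1 p) ^ 2 - 1 / (w l1 p) ^ 2 := by
    intro p hp
    rw [hBf]; unfold B; rw [if_neg hp]
  have hA00 : A 0 = 0 := by rw [hA]; unfold B; rw [if_pos rfl]
  have hB00 : Bf 0 = 0 := by rw [hBf]; unfold B; rw [if_pos rfl]
  have key : ∀ p : ℤ × ℤ, A (p + p₀) - Bf p = Sf p + cf p := by
    intro p
    rcases eq_or_ne p 0 with hp0 | hp0
    · subst hp0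
      rw [zero_add, hApx p₀ h0, hB00, ← hb]
      have hS0 : Sf 0 = 0 := by rw [hSf]; simp
      have hc0 : cf 0 = 1 / ζ ^ 2 - 1 / b ^ 2 := by rw [hcf]; norm_num
      rw [hS0, hc0, show ζ + b - b = ζ by ring]
      ring
    · rcases eq_or_ne p (-p₀) with hpn | hpn
      · subst hpn
        rw [neg_add_cancel, hA00, hBpx _ hp0, w_neg, ← hb]
        have hS0 : Sf (-p₀) = 0 := by
          rw [hSf]
          simp
        have hc0 : cf (-p₀) = 1 / b ^ 2 - 1 / (ζ + b) ^ 2 := by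
          rw [hcf]
          simp only [if_neg hp0, if_pos rfl]
          norm_num
        rw [hS0, hc0, show ζ - -b = ζ + b by ring, show (-b) ^ 2 = b ^ 2 by ring]
        ring
      · have hpp : p + p₀ ≠ 0 := fun hc2 => hpn (by linear_combination hc2)
        rw [hApx _ hpp, hBpx _ hp0]
        have hS0 : Sf p = 1 / (w l1 p) ^ 2 - 1 / (w l1 (p + p₀)) ^ 2 := by
          rw [hSf]
          simp only
          rw [if_neg (by push_neg; exact ⟨hp0, hpp⟩)]
        have hc0 : cf p = 0 := by
          rw [hcf]
          simp only [if_neg hp0, if_neg hpn]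
        rw [hS0, hc0]
        have hw : w l1 (p + p₀) = w l1 p + b := by rw [w_add, hb]
        rw [show ζ + b - w l1 (p + p₀) = ζ - w l1 p by rw [hw]; ring]
        ring
  have sumSf : Summable Sf := by
    have heq : Sf = fun p => (A (p + p₀) - Bf p) - cf p := by
      funext p
      rw [key p]
      ring
    rw [heq]
    exact (sumA'.sub sumBf).sub sumcf
  have hSf0 : ∑' p, Sf p = 0 := by
    have hanti : ∀ p : ℤ × ℤ, Sf (-p₀ - p) = -Sf p := by
      intro p
      rcases eq_or_ne p 0 with h | h
      · subst h
        rw [sub_zero]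
        have t1 : Sf (-p₀) = 0 := by rw [hSf]; simp
        have t2 : Sf 0 = 0 := by rw [hSf]; simp
        rw [t1, t2]
        ring
      · rcases eq_or_ne p (-p₀) with h2 | h2
        · subst h2
          have e : -p₀ - -p₀ = (0 : ℤ × ℤ) := by abel
          rw [e]
          have t1 : Sf 0 = 0 := by rw [hSf]; simp
          have t2 : Sf (-p₀) = 0 := by rw [hSf]; simp
          rw [t1, t2]
          ring
        · have hq0 : -p₀ - p ≠ 0 := fun hc2 => h2 (by linear_combination -hc2)
          have hq1 : -p₀ - p + p₀ ≠ 0 := fun hc2 => h (by linear_combination -hc2)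
          have hp1 : p + p₀ ≠ 0 := fun hc2 => h2 (by linear_combination hc2)
          have t1 : Sf (-p₀ - p) = 1 / (w l1 (-p₀ - p)) ^ 2 - 1 / (w l1 (-p₀ - p + p₀)) ^ 2 := by
            rw [hSf]
            simp only
            rw [if_neg (by push_neg; exact ⟨hq0, hq1⟩)]
          have t2 : Sf p = 1 / (w l1 p) ^ 2 - 1 / (w l1 (p + p₀)) ^ 2 := by
            rw [hSf]
            simp only
            rw [if_neg (by push_neg; exact ⟨h, hp1⟩)]
          rw [t1, t2]
          have e1 : -p₀ - p + p₀ = -p := by abel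
          have e3 : -p₀ - p = -(p + p₀) := by abel
          rw [e1, e3, w_neg, w_neg]
          rw [show (-(w l1 (p + p₀))) ^ 2 = (w l1 (p + p₀)) ^ 2 by ring,
            show (-(w l1 p)) ^ 2 = (w l1 p) ^ 2 by ring]
          ring
    have h1 : ∑' p, Sf p = ∑' p, Sf (-p₀ - p) := by
      rw [← Equiv.tsum_eq ((Equiv.neg (ℤ × ℤ)).trans (Equiv.addLeft (-p₀))) Sf]
      apply tsum_congr
      intro p
      have ep : ((Equiv.neg (ℤ × ℤ)).trans (Equiv.addLeft (-p₀))) p = -p₀ - p := by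
        simp [sub_eq_add_neg]
      rw [ep]
    have h2 : ∑' p, Sf (-p₀ - p) = ∑' p, -Sf p := tsum_congr fun p => hanti p
    rw [h2, tsum_neg] at h1
    linear_combination h1 / 2
  have c0 : cf 0 = 1 / ζ ^ 2 - 1 / b ^ 2 := by rw [hcf]; norm_num
  have c1 : cf (-p₀) = 1 / b ^ 2 - 1 / (ζ + b) ^ 2 := by
    rw [hcf]
    simp only [if_neg (neg_ne_zero.2 h0), if_pos rfl]
    norm_num
  have hcfsum : ∑' p, cf p = (1 / ζ ^ 2 - 1 / b ^ 2) + (1 / b ^ 2 - 1 / (ζ + b) ^ 2) := by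
    rw [tsum_eq_sum (s := {0, -p₀}) (by
      intro p hp
      simp only [Finset.mem_insert, Finset.mem_singleton] at hp
      push_neg at hp
      simp only [hcf, if_neg hp.1, if_neg hp.2])]
    rw [Finset.sum_pair (by
      intro hc2
      exact h0 (by simpa using congrArg Neg.neg hc2.symm)), c0, c1]
  have main : ∑' p, A p - ∑' p, Bf p = 1 / ζ ^ 2 - 1 / (ζ + b) ^ 2 := by
    have e1 : ∑' p, A p = ∑' p, A (p + p₀) := (Equiv.tsum_eq (Equiv.addRight p₀) A).symm
    rw [e1, ← Summable.tsum_sub sumA' sumBf, tsum_congr key, Summable.tsum_add sumSf sumcf, hSf0, hcfsum]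
    ring
  rw [wp_eq' l1 (ζ + b), wp_eq' l1 ζ]
  unfold F
  rw [← hA, ← hBf]
  linear_combination main

lemma le_of_sq_le' {a b : ℝ} (ha : 0 ≤ a) (hb : 0 ≤ b) (h : a^2 ≤ b^2) : a ≤ b := by
  nlinarith

lemma sqrt2_le : Real.sqrt 2 ≤ 1.5 := by
  rw [show (1.5 : ℝ) = Real.sqrt (1.5 ^ 2) from (Real.sqrt_sq (by norm_num)).symm]
  apply Real.sqrt_le_sqrt
  norm_num

lemma sin_pi_div_eight_ge : (1 : ℝ) / 9 ≤ Real.sin (Real.pi / 8) := by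
  rw [Real.sin_pi_div_eight]
  have h1 : (2 : ℝ) / 9 ≤ Real.sqrt (2 - Real.sqrt 2) := by
    have h2 : (2 : ℝ) / 9 = Real.sqrt ((2 / 9) ^ 2) := (Real.sqrt_sq (by norm_num)).symm
    rw [h2]
    apply Real.sqrt_le_sqrt
    nlinarith [sqrt2_le]
  linarith

end S14

open S14 in
set_option maxHeartbeats 1000000 in
theorem stmt14 (l1 : ℂ) (hl1 : l1 ≠ 0) :
    ∃ r ε ρ : ℝ, ∃ φ : ℝ, 0 < r ∧ r < 1 / 2 ∧ 0 < ε ∧ 0 < ρ ∧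
      ∀ β ∈ Metric.ball (1 : ℂ) r, ∀ b ∈ lattice l1,
        {z : ℂ | ρ ≤ ‖z‖ ∧
            ∃ θ : ℝ, φ - Real.pi / 8 ≤ θ ∧ θ ≤ φ + 9 * Real.pi / 8 ∧
              z = (‖z‖ : ℂ) * Complex.exp (θ * Complex.I)} ⊆
          (fun z => β * wp l1 z) '' (sector b ε \ {b}) := by
  have hpi := Real.pi_pos
  have habsl1 : 0 < ‖l1‖ := norm_pos_iff.mpr hl1
  set c : ℝ := ‖l1‖ / Real.sqrt 2 with hcdef
  have hs2 : 0 < Real.sqrt 2 := Real.sqrt_pos.2 (by norm_num)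
  have hcpos : 0 < c := by positivity
  set ε : ℝ := c / 2 with hεdef
  have hεpos : 0 < ε := by positivity
  set C0 : ℝ := ∑' p, WB l1 p with hC0def
  have hC0 : 0 ≤ C0 := tsum_nonneg (WB_nonneg l1)
  set L : ℝ := 48 * C0 with hLdef
  have hL : 0 ≤ L := by positivity
  set M : ℝ := L * ε with hMdef
  have hM : 0 ≤ M := by positivity
  set c8 : ℝ := Real.cos (3 * Real.pi / 8) with hc8def
  set s8 : ℝ := Real.sin (3 * Real.pi / 8) with hs8def
  have hc8 : 0 < c8 := Real.cos_pos_of_mem_Ioo ⟨by linarith, by linarith⟩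
  have hs8 : 0 < s8 := Real.sin_pos_of_pos_of_lt_pi (by linarith) (by linarith)
  have hsc1 : s8 ^ 2 + c8 ^ 2 = 1 := Real.sin_sq_add_cos_sq _
  set ρ : ℝ := 20 * (M + 1) + 2 / ε ^ 2 + 4 * (L + 1) / c8 with hρdef
  have hρpos : 0 < ρ := by positivity
  clear_value c ε C0 L M c8 s8 ρ
  refine ⟨1/21, ε, ρ, -(Real.pi/2), by norm_num, by norm_num, hεpos, hρpos, ?_⟩
  intro β hβ b hbmem
  obtain ⟨lL, mm, hbeq⟩ := hbmem
  have hbw : b = w l1 (lL, mm) := hbeq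
  set p₀ : ℤ × ℤ := (lL, mm) with hp₀def
  -- facts about β
  have hβd : ‖β - 1‖ < 1/21 := by
    rw [Metric.mem_ball, Complex.dist_eq] at hβ
    exact hβ
  have hβlow : 20/21 ≤ ‖β‖ := by
    have h1 : ‖(1:ℂ)‖ - ‖β‖ ≤ ‖(1:ℂ) - β‖ := norm_sub_norm_le 1 β
    have h2 : ‖(1:ℂ) - β‖ = ‖β - 1‖ := by
      rw [norm_sub_rev]
    rw [h2] at h1
    simp only [norm_one] at h1
    linarith
  have hβhi : ‖β‖ ≤ 22/21 := by
    have h1 : ‖β‖ - ‖(1:ℂ)‖ ≤ ‖β - 1‖ := norm_sub_norm_le β 1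
    simp only [norm_one] at h1
    linarith
  have hβ0 : β ≠ 0 := by
    intro h
    rw [h] at hβlow
    simp at hβlow
    linarith
  have hinvβ : ‖1/β - 1‖ ≤ 1/20 := by
    have h1 : 1/β - 1 = (1 - β)/β := by field_simp
    rw [h1, norm_div]
    have h2 : ‖1 - β‖ = ‖β - 1‖ := norm_sub_rev _ _
    rw [h2, div_le_iff₀ (by linarith)]
    linarith
  intro zt hzt
  obtain ⟨hρzt, θ, hθ1, hθ2, hztEq⟩ := hzt
  have hθa : -(5 * Real.pi / 8) ≤ θ := by linarith
  have hθb : θ ≤ 5 * Real.pi / 8 := by linarith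
  have habszt : 0 < ‖zt‖ := by linarith
  have hzt0 : zt ≠ 0 := by
    intro h
    rw [h] at habszt
    simp at habszt
  have hargzt : zt.arg = θ := by
    rw [hztEq]
    rw [Complex.arg_real_mul _ habszt, Complex.exp_mul_I]
    exact Complex.arg_cos_add_sin_mul_I ⟨by linarith, by linarith⟩
  -- the sector set K
  set slope : ℝ := s8 / c8 with hslopedef
  set K : Set ℂ := {z | ‖z‖ ≤ ε ∧ |z.im| ≤ slope * z.re} with hKdef
  have hKclosed : IsClosed K := by
    rw [hKdef, show {z : ℂ | ‖z‖ ≤ ε ∧ |z.im| ≤ slope * z.re}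
      = {z : ℂ | ‖z‖ ≤ ε} ∩ {z : ℂ | |z.im| ≤ slope * z.re} from rfl]
    apply IsClosed.inter
    · exact isClosed_le continuous_norm continuous_const
    · exact isClosed_le (continuous_abs.comp Complex.continuous_im)
        (continuous_const.mul Complex.continuous_re)
  have h0K : (0:ℂ) ∈ K := by
    constructor
    · simp only [norm_zero]
      linarith
    · simp
  -- the fixed point map
  set Tf : ℂ → ℂ := fun ζ => Complex.exp (((-(1/2) : ℝ) : ℂ) *
    Complex.log (zt/β - F l1 ζ)) with hTfdef
  -- bound on F on K
  have hFbound : ∀ ζ : ℂ, ‖ζ‖ ≤ ε → ‖F l1 ζ‖ ≤ M := by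
    intro ζ hζ
    have h1 := F_lip hl1 (z := ζ) (z' := 0) (by rw [← hcdef, ← hεdef]; exact hζ)
      (by simp only [norm_zero]; positivity)
    rw [F_zero, sub_zero, sub_zero, ← hC0def] at h1
    calc ‖F l1 ζ‖ ≤ 48 * ‖ζ‖ * C0 := h1
      _ ≤ 48 * ε * C0 := by
          have h2 := mul_le_mul_of_nonneg_right
            (mul_le_mul_of_nonneg_left hζ (by norm_num : (0:ℝ) ≤ 48)) hC0
          linarith
      _ = M := by rw [hMdef, hLdef]; ring
  -- square root facts
  have hsq_facts : ∀ u : ℂ, 9/10 * ρ ≤ ‖u‖ → |u.arg| ≤ 3 * Real.pi / 4 →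
      ∃ sq : ℂ, sq ^ 2 = u ∧
        Complex.exp (((-(1/2) : ℝ) : ℂ) * Complex.log u) = sq⁻¹ ∧
        1 ≤ ‖sq‖ ∧ 1/ε ≤ ‖sq‖ ∧
        c8 * ‖sq‖ ≤ sq.re ∧ |sq.im| ≤ s8 * ‖sq‖ ∧
        2 * (L + 1) ≤ c8 * (‖sq‖) ^ 2 := by
    intro u hru hau
    have habsu : 0 < ‖u‖ := by
      have h9 : 0 < 9/10 * ρ := by positivity
      linarith
    have hu0 : u ≠ 0 := by
      intro h
      rw [h] at habsu
      simp at habsu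
    set x : ℂ := (((1/2) : ℝ) : ℂ) * Complex.log u with hxdef
    have hxre : x.re = Real.log (‖u‖) / 2 := by
      rw [hxdef, Complex.re_ofReal_mul, Complex.log_re]
      ring
    have hxim : x.im = u.arg / 2 := by
      rw [hxdef, Complex.im_ofReal_mul, Complex.log_im]
      ring
    set sq : ℂ := Complex.exp x with hsqdef
    set Eu : ℝ := Real.exp (Real.log (‖u‖) / 2) with hEudef
    have habs_sq : ‖sq‖ = Eu := by
      rw [hsqdef, Complex.norm_exp, hxre]
    have hEupos : 0 < Eu := Real.exp_pos _
    have hEusq : Eu ^ 2 = ‖u‖ := by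
      rw [hEudef, pow_two, ← Real.exp_add, show Real.log (‖u‖) / 2
        + Real.log (‖u‖) / 2 = Real.log (‖u‖) by ring]
      exact Real.exp_log habsu
    have hsq2 : sq ^ 2 = u := by
      rw [hsqdef, pow_two, ← Complex.exp_add, show x + x = Complex.log u by
        rw [hxdef]; push_cast; ring]
      exact Complex.exp_log hu0
    have hinv : Complex.exp (((-(1/2) : ℝ) : ℂ) * Complex.log u) = sq⁻¹ := by
      rw [hsqdef, hxdef, ← Complex.exp_neg]
      congr 1
      push_cast
      ring
    -- pieces of ρ
    have hρ1 : 9/10 * (20 * (M + 1)) ≤ ‖u‖ := by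
      have : 20 * (M+1) ≤ ρ := by
        rw [hρdef]
        have : 0 ≤ 2 / ε ^ 2 := by positivity
        have : 0 ≤ 4 * (L + 1) / c8 := by positivity
        linarith
      linarith
    have hρ2 : 9/10 * (2 / ε ^ 2) ≤ ‖u‖ := by
      have : 2 / ε ^ 2 ≤ ρ := by
        rw [hρdef]
        have h1 : 0 ≤ 20 * (M+1) := by positivity
        have h2 : 0 ≤ 4 * (L + 1) / c8 := by positivity
        linarith
      linarith
    have hρ3 : 9/10 * (4 * (L+1) / c8) ≤ ‖u‖ := by
      have : 4 * (L+1) / c8 ≤ ρ := by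
        rw [hρdef]
        have h1 : 0 ≤ 20 * (M+1) := by positivity
        have h2 : 0 ≤ 2 / ε ^ 2 := by positivity
        linarith
      linarith
    have hEu1 : 1 ≤ Eu := by
      apply le_of_sq_le' (by norm_num) hEupos.le
      rw [hEusq]
      norm_num
      linarith
    have hEuε : 1/ε ≤ Eu := by
      have he : 0 < 1/ε := by positivity
      have h2 : (1/ε)^2 * (9/10 * 2) ≤ Eu ^ 2 := by
        rw [hEusq]
        calc (1/ε)^2 * (9/10 * 2) = 9/10 * (2 / ε^2) := by
              field_simp
          _ ≤ ‖u‖ := hρ2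
      apply le_of_sq_le' he.le hEupos.le
      have h3 : 0 ≤ (1/ε)^2 := by positivity
      linarith
    have hc8sq : 2 * (L + 1) ≤ c8 * Eu ^ 2 := by
      rw [hEusq]
      have h3 : c8 * (9/10 * (4 * (L+1) / c8)) = 18/5 * (L+1) := by
        field_simp
        ring
      have h4 := mul_le_mul_of_nonneg_left hρ3 hc8.le
      linarith
    -- argument bounds
    have hhalf : |u.arg / 2| ≤ 3 * Real.pi / 8 := by
      rw [abs_div]
      rw [show |(2:ℝ)| = 2 by norm_num]
      linarith [hau]
    have hhalf2 : -(Real.pi/2) ≤ u.arg / 2 ∧ u.arg / 2 ≤ Real.pi / 2 := by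
      rw [abs_le] at hhalf
      constructor <;> linarith [hhalf.1, hhalf.2]
    have hcos : c8 ≤ Real.cos (u.arg / 2) := by
      rw [← Real.cos_abs]
      rw [hc8def]
      apply Real.cos_le_cos_of_nonneg_of_le_pi (abs_nonneg _) (by linarith) hhalf
    have hsin : |Real.sin (u.arg / 2)| ≤ s8 := by
      rw [abs_le] at hhalf ⊢
      constructor
      · rw [show -s8 = Real.sin (-(3 * Real.pi / 8)) by rw [hs8def, Real.sin_neg]]
        apply Real.strictMonoOn_sin.monotoneOn ⟨by linarith, by linarith⟩
          ⟨hhalf2.1, hhalf2.2⟩ (by linarith [hhalf.1])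
      · rw [hs8def]
        apply Real.strictMonoOn_sin.monotoneOn ⟨hhalf2.1, hhalf2.2⟩
          ⟨by linarith, by linarith⟩ (by linarith [hhalf.2])
    have hre_sq : sq.re = Eu * Real.cos (u.arg / 2) := by
      rw [hsqdef, Complex.exp_re, hxre, hxim, hEudef]
    have him_sq : sq.im = Eu * Real.sin (u.arg / 2) := by
      rw [hsqdef, Complex.exp_im, hxre, hxim, hEudef]
    refine ⟨sq, hsq2, hinv, ?_, ?_, ?_, ?_, ?_⟩
    · rw [habs_sq]; exact hEu1
    · rw [habs_sq]; exact hEuε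
    · rw [habs_sq, hre_sq]
      have h4 := mul_le_mul_of_nonneg_left hcos hEupos.le
      linarith
    · rw [habs_sq, him_sq, abs_mul, abs_of_pos hEupos]
      have h4 := mul_le_mul_of_nonneg_left hsin hEupos.le
      linarith
    · rw [habs_sq]; exact hc8sq
  -- facts about u for ζ ∈ K
  have hu_facts : ∀ ζ : ℂ, ζ ∈ K →
      9/10 * ρ ≤ ‖zt/β - F l1 ζ‖ ∧
      |(zt/β - F l1 ζ).arg| ≤ 3 * Real.pi / 4 := by
    intro ζ hζ
    obtain ⟨hζε, hζim⟩ := hζ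
    have hFζ : ‖F l1 ζ‖ ≤ M := hFbound ζ hζε
    set v : ℂ := 1/β - F l1 ζ / zt with hvdef
    have huv : zt/β - F l1 ζ = zt * v := by
      rw [hvdef]
      field_simp
    have hv1 : ‖v - 1‖ ≤ 1/10 := by
      have h1 : v - 1 = (1/β - 1) - F l1 ζ / zt := by rw [hvdef]; ring
      rw [h1]
      have h2 : ‖(1/β - 1) - F l1 ζ / zt‖
          ≤ ‖1/β - 1‖ + ‖F l1 ζ / zt‖ := by
        simpa using norm_sub_le (1/β - 1) (F l1 ζ / zt)
      have h3 : ‖F l1 ζ / zt‖ ≤ 1/20 := by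
        rw [norm_div]
        rw [div_le_iff₀ habszt]
        have hM20 : 20 * M ≤ ρ := by
          rw [hρdef]
          have h4 : 0 ≤ 2 / ε ^ 2 := by positivity
          have h5 : 0 ≤ 4 * (L + 1) / c8 := by positivity
          linarith
        have h6 : 20 * M ≤ 20 * (1/20 * ‖zt‖) := by linarith
        linarith
      linarith
    have hvre : 9/10 ≤ v.re := by
      have h1 : |(v - 1).re| ≤ ‖v - 1‖ := Complex.abs_re_le_norm _
      have h2 : (v - 1).re = v.re - 1 := by simp
      rw [h2] at h1
      rw [abs_le] at h1
      linarith [h1.1]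
    have hvim : |v.im| ≤ 1/10 := by
      have h1 : |(v - 1).im| ≤ ‖v - 1‖ := Complex.abs_im_le_norm _
      have h2 : (v - 1).im = v.im := by simp
      rw [h2] at h1
      linarith
    have hv0 : v ≠ 0 := by
      intro h
      rw [h] at hvre
      simp at hvre
      linarith
    have habsv : 9/10 ≤ ‖v‖ := by
      have := Complex.abs_re_le_norm v
      have h2 : v.re ≤ |v.re| := le_abs_self _
      linarith
    have habsv2 : ‖v‖ ≤ 11/10 := by
      have h1 : ‖v‖ ≤ ‖v - 1‖ + ‖(1:ℂ)‖ := by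
        calc ‖v‖ = ‖(v - 1) + 1‖ := by ring_nf
          _ ≤ _ := norm_add_le _ _
      simp at h1
      linarith
    have hargv : |v.arg| ≤ Real.pi / 8 := by
      have h1 : v.arg = Real.arcsin (v.im / ‖v‖) :=
        Complex.arg_of_re_nonneg (by linarith)
      have habsvpos : 0 < ‖v‖ := by linarith
      have h2 : |v.im / ‖v‖| ≤ 1/9 := by
        rw [abs_div, abs_of_pos habsvpos, div_le_iff₀ habsvpos]
        linarith
      rw [h1, abs_le]
      rw [abs_le] at h2
      constructor
      · rw [show -(Real.pi/8) = Real.arcsin (Real.sin (-(Real.pi/8))) from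
          (Real.arcsin_sin (by linarith) (by linarith)).symm]
        apply Real.monotone_arcsin
        rw [Real.sin_neg]
        linarith [sin_pi_div_eight_ge, h2.1]
      · rw [show Real.pi/8 = Real.arcsin (Real.sin (Real.pi/8)) from
          (Real.arcsin_sin (by linarith) (by linarith)).symm]
        apply Real.monotone_arcsin
        linarith [sin_pi_div_eight_ge, h2.2]
    have hargu : (zt * v).arg = θ + v.arg := by
      rw [Complex.arg_mul hzt0 hv0]
      · rw [hargzt]
      · rw [hargzt]
        constructor
        · rw [abs_le] at hargv
          have := hargv.1
          linarith
        · rw [abs_le] at hargv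
          have := hargv.2
          linarith
    constructor
    · rw [huv, norm_mul]
      have h7 := mul_le_mul_of_nonneg_left habsv habszt.le
      have h8 : 9/10 * ρ ≤ 9/10 * ‖zt‖ := by linarith
      calc 9/10 * ρ ≤ 9/10 * ‖zt‖ := h8
        _ = ‖zt‖ * (9/10) := by ring
        _ ≤ ‖zt‖ * ‖v‖ := h7
    · rw [huv, hargu, abs_le]
      rw [abs_le] at hargv
      constructor
      · linarith [hargv.1]
      · linarith [hargv.2]
  -- Tf maps K into K, and the square identity
  have hTfK : ∀ ζ ∈ K, Tf ζ ∈ K ∧ (Tf ζ) ^ 2 * (zt/β - F l1 ζ) = 1 := by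
    intro ζ hζ
    obtain ⟨hru, hau⟩ := hu_facts ζ hζ
    obtain ⟨sq, hsq2, hinv, hsq1, hsqε, hsqre, hsqim, hsqc8⟩ := hsq_facts _ hru hau
    have hsqpos : 0 < ‖sq‖ := by linarith
    have hsqne : sq ≠ 0 := by
      intro h
      rw [h] at hsqpos
      simp at hsqpos
    have hTfval : Tf ζ = sq⁻¹ := hinv
    have hslpos : 0 < slope := by rw [hslopedef]; positivity
    constructor
    · constructor
      · rw [hTfval, norm_inv]
        calc (‖sq‖)⁻¹ = 1 / ‖sq‖ := (one_div _).symm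
          _ ≤ 1 / (1/ε) := one_div_le_one_div_of_le (by positivity) hsqε
          _ = ε := one_div_one_div ε
      · rw [hTfval, Complex.inv_re, Complex.inv_im]
        have hnsq : 0 < Complex.normSq sq := Complex.normSq_pos.2 hsqne
        have hnum : |sq.im| ≤ slope * sq.re := by
          have h2 : slope * (c8 * ‖sq‖) ≤ slope * sq.re :=
            mul_le_mul_of_nonneg_left hsqre hslpos.le
          have h3 : slope * (c8 * ‖sq‖) = s8 * ‖sq‖ := by
            rw [hslopedef]
            field_simp
          linarith
        rw [abs_div, abs_neg, abs_of_pos hnsq, ← mul_div_assoc]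
        exact (div_le_div_iff_of_pos_right hnsq).2 hnum
    · rw [hTfval, ← hsq2]
      field_simp
  -- contraction estimate
  have hcontraction : ∀ ζ ∈ K, ∀ ζ' ∈ K,
      ‖Tf ζ - Tf ζ'‖ ≤ 1/2 * ‖ζ - ζ'‖ := by
    intro ζ hζ ζ' hζ'
    obtain ⟨hru, hau⟩ := hu_facts ζ hζ
    obtain ⟨hru', hau'⟩ := hu_facts ζ' hζ'
    obtain ⟨sq, hsq2, hinv, hsq1, hsqε, hsqre, hsqim, hsqc8⟩ := hsq_facts _ hru hau
    obtain ⟨sq', hsq2', hinv', hsq1', hsqε', hsqre', hsqim', hsqc8'⟩ := hsq_facts _ hru' hau'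
    have hsqpos : 0 < ‖sq‖ := by linarith
    have hsqpos' : 0 < ‖sq'‖ := by linarith
    have hsqne : sq ≠ 0 := by
      intro h; rw [h] at hsqpos; simp at hsqpos
    have hsqne' : sq' ≠ 0 := by
      intro h; rw [h] at hsqpos'; simp at hsqpos'
    have hsumre : c8 * (‖sq‖ + ‖sq'‖) ≤ (sq + sq').re := by
      rw [Complex.add_re]
      have h1 := mul_le_mul_of_nonneg_left hsq1 hc8.le
      linarith
    have hsumpos : 0 < (sq + sq').re := by
      have h1 : c8 * 2 ≤ c8 * (‖sq‖ + ‖sq'‖) := by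
        apply mul_le_mul_of_nonneg_left _ hc8.le
        linarith
      linarith
    have hsumne : sq + sq' ≠ 0 := by
      intro h
      rw [h] at hsumpos
      simp at hsumpos
    have habssum : c8 * (‖sq‖ + ‖sq'‖) ≤ ‖sq + sq'‖ :=
      le_trans hsumre (Complex.re_le_norm _)
    have hid : Tf ζ - Tf ζ' = (sq' ^ 2 - sq ^ 2) / ((sq + sq') * (sq * sq')) := by
      rw [show Tf ζ = sq⁻¹ from hinv, show Tf ζ' = sq'⁻¹ from hinv']
      field_simp
      ring
    have habs_num : ‖sq' ^ 2 - sq ^ 2‖ ≤ L * ‖ζ - ζ'‖ := by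
      rw [hsq2, hsq2']
      rw [show (zt/β - F l1 ζ') - (zt/β - F l1 ζ) = F l1 ζ - F l1 ζ' by ring]
      have hb1 : ‖ζ‖ ≤ ‖l1‖ / Real.sqrt 2 / 2 := by
        have := hζ.1
        rw [hεdef, hcdef] at this
        exact this
      have hb2 : ‖ζ'‖ ≤ ‖l1‖ / Real.sqrt 2 / 2 := by
        have := hζ'.1
        rw [hεdef, hcdef] at this
        exact this
      calc ‖F l1 ζ - F l1 ζ'‖
          ≤ 48 * ‖ζ - ζ'‖ * C0 := by
            have := F_lip hl1 hb1 hb2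
            rw [← hC0def] at this
            exact this
        _ = L * ‖ζ - ζ'‖ := by rw [hLdef]; ring
    have hden : 2 * (L + 1) ≤ ‖sq + sq'‖ * (‖sq‖ * ‖sq'‖) := by
      have t1 : c8 * ‖sq‖ ≤ ‖sq + sq'‖ := by
        have h1 : c8 * ‖sq‖ ≤ c8 * (‖sq‖ + ‖sq'‖) := by
          apply mul_le_mul_of_nonneg_left _ hc8.le
          linarith
        linarith
      have t2 : (c8 * ‖sq‖) * (‖sq‖ * ‖sq'‖)
          ≤ ‖sq + sq'‖ * (‖sq‖ * ‖sq'‖) :=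
        mul_le_mul_of_nonneg_right t1 (by positivity)
      have t3 : 2 * (L + 1) * 1 ≤ (c8 * (‖sq‖)^2) * ‖sq'‖ := by
        apply mul_le_mul hsqc8 hsq1' (by norm_num) (by positivity)
      have t4 : (c8 * (‖sq‖)^2) * ‖sq'‖
          = (c8 * ‖sq‖) * (‖sq‖ * ‖sq'‖) := by ring
      linarith
    rw [hid, norm_div, norm_mul, norm_mul]
    have hdenpos : 0 < ‖sq + sq'‖ * (‖sq‖ * ‖sq'‖) := by
      have := norm_pos_iff.mpr hsumne
      positivity
    calc ‖sq' ^ 2 - sq ^ 2‖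
          / (‖sq + sq'‖ * (‖sq‖ * ‖sq'‖))
        ≤ (L * ‖ζ - ζ'‖) / (2 * (L + 1)) := by
          apply div_le_div₀ (by positivity) habs_num (by positivity) hden
      _ ≤ 1/2 * ‖ζ - ζ'‖ := by
          rw [div_le_iff₀ (by positivity)]
          have h1 : 0 ≤ ‖ζ - ζ'‖ := norm_nonneg _
          have h2 : L * ‖ζ - ζ'‖ ≤ (L+1) * ‖ζ - ζ'‖ :=
            mul_le_mul_of_nonneg_right (by linarith) h1
          have h3 : 1/2 * ‖ζ - ζ'‖ * (2*(L+1)) = (L+1) * ‖ζ - ζ'‖ := by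
            ring
          linarith
  -- Banach fixed point
  haveI hcompl : CompleteSpace K := hKclosed.completeSpace_coe
  haveI hne : Nonempty K := ⟨⟨0, h0K⟩⟩
  set Tf' : K → K := fun x => ⟨Tf x.1, (hTfK x.1 x.2).1⟩ with hTf'def
  have hlip : LipschitzWith (1/2 : NNReal) Tf' := by
    apply LipschitzWith.of_dist_le_mul
    intro x y
    have h1 : dist (Tf' x) (Tf' y) = ‖Tf x.1 - Tf y.1‖ := by
      rw [Subtype.dist_eq, Complex.dist_eq]
    have h2 : dist x y = ‖x.1 - y.1‖ := by
      rw [Subtype.dist_eq, Complex.dist_eq]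
    rw [h1, h2]
    have h3 : ((1/2 : NNReal) : ℝ) = 1/2 := by norm_num
    rw [h3]
    exact hcontraction _ x.2 _ y.2
  have hcw : ContractingWith (1/2 : NNReal) Tf' := by
    refine ⟨?_, hlip⟩
    have h : ((1/2 : NNReal) : ℝ) < ((1 : NNReal) : ℝ) := by norm_num
    exact_mod_cast h
  set ζs : K := ContractingWith.fixedPoint Tf' hcw with hζsdef
  have hfix : Tf' ζs = ζs := hcw.fixedPoint_isFixedPt
  set ζ : ℂ := (ζs : ℂ) with hζdef
  have hζK : ζ ∈ K := ζs.2
  have hfixζ : Tf ζ = ζ := congrArg Subtype.val hfix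
  have hζne : ζ ≠ 0 := by
    rw [← hfixζ, hTfdef]
    exact Complex.exp_ne_zero _
  obtain ⟨hζε, hζim⟩ := hζK
  obtain ⟨hTfKmem, hTfsq⟩ := hTfK ζ ζs.2
  rw [hfixζ] at hTfsq
  -- the value identity
  have hval : β * wp l1 (ζ + b) = zt := by
    rw [hbw, wp_periodic hl1 p₀ ζ, wp_eq']
    have hζsq : ζ^2 ≠ 0 := pow_ne_zero _ hζne
    have h1 : 1/ζ^2 = zt/β - F l1 ζ := by
      rw [div_eq_iff hζsq]
      linear_combination -hTfsq
    rw [h1, show zt/β - F l1 ζ + F l1 ζ = zt/β by ring]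
    field_simp
  -- sector membership
  have hslpos : 0 < slope := by rw [hslopedef]; positivity
  have hre_pos : 0 < ζ.re := by
    rcases lt_or_ge 0 ζ.re with h | h
    · exact h
    · exfalso
      have h2 : 0 ≤ |ζ.im| := abs_nonneg _
      have h3 : slope * ζ.re ≤ 0 := mul_nonpos_of_nonneg_of_nonpos hslpos.le h
      have him0 : ζ.im = 0 := abs_eq_zero.1 (le_antisymm (le_trans hζim h3) h2)
      have h4 : 0 ≤ slope * ζ.re := by
        rw [him0] at hζim
        simpa using hζim
      have hre0 : ζ.re = 0 :=
        le_antisymm h ((mul_nonneg_iff_of_pos_left hslpos).1 h4)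
      exact hζne (Complex.ext hre0 him0)
  have habsζpos : 0 < ‖ζ‖ := norm_pos_iff.mpr hζne
  have hims8 : |ζ.im| ≤ s8 * ‖ζ‖ := by
    have hsqa : (‖ζ‖)^2 = ζ.re^2 + ζ.im^2 := by
      rw [Complex.sq_norm, Complex.normSq_apply]
      ring
    have h1 : |ζ.im| * c8 ≤ s8 * ζ.re := by
      have h0 := hζim
      rw [hslopedef] at h0
      calc |ζ.im| * c8 ≤ (s8/c8*ζ.re)*c8 := mul_le_mul_of_nonneg_right h0 hc8.le
        _ = s8 * ζ.re := by field_simp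
    have q1 : ζ.im^2 * c8^2 ≤ s8^2 * ζ.re^2 := by
      have q0 := pow_le_pow_left₀ (by positivity) h1 2
      rw [mul_pow, mul_pow, _root_.sq_abs] at q0
      exact q0
    have q2 : ζ.im^2 * s8^2 + ζ.im^2 * c8^2 = ζ.im^2 := by
      linear_combination (ζ.im^2) * hsc1
    have q3 : ζ.im^2 ≤ s8^2 * ζ.re^2 + ζ.im^2 * s8^2 := by linarith
    apply le_of_sq_le' (abs_nonneg _) (by positivity)
    rw [_root_.sq_abs, mul_pow, hsqa]
    have q4 : s8^2 * (ζ.re^2 + ζ.im^2) = s8^2 * ζ.re^2 + ζ.im^2 * s8^2 := by ring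
    linarith
  have hargbound : -(3*Real.pi/8) ≤ ζ.arg ∧ ζ.arg ≤ 3*Real.pi/8 := by
    have hargζ : ζ.arg = Real.arcsin (ζ.im / ‖ζ‖) :=
      Complex.arg_of_re_nonneg hre_pos.le
    have h1 : |ζ.im / ‖ζ‖| ≤ s8 := by
      rw [abs_div, abs_of_pos habsζpos, div_le_iff₀ habsζpos]
      linarith [hims8]
    rw [hargζ]
    rw [abs_le] at h1
    constructor
    · rw [show -(3*Real.pi/8) = Real.arcsin (Real.sin (-(3*Real.pi/8))) from
        (Real.arcsin_sin (by linarith) (by linarith)).symm]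
      apply Real.monotone_arcsin
      rw [Real.sin_neg, ← hs8def]
      linarith [h1.1]
    · rw [show 3*Real.pi/8 = Real.arcsin (Real.sin (3*Real.pi/8)) from
        (Real.arcsin_sin (by linarith) (by linarith)).symm]
      apply Real.monotone_arcsin
      rw [← hs8def]
      linarith [h1.2]
  refine ⟨ζ + b, ⟨⟨?_, ?_, ?_⟩, ?_⟩, hval⟩
  · rw [show ζ + b - b = ζ by ring]
    exact hζε
  · rw [show ζ + b - b = ζ by ring]
    exact hargbound.1
  · rw [show ζ + b - b = ζ by ring]
    exact hargbound.2
  · simp only [Set.mem_singleton_iff]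
    intro h
    exact hζne (by linear_combination h)
end
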